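/- In the lower-bound arena A (described as: nodes u, t, v₀, …, vₙ; z-edges from u to each vᵢ; x-edge from vᵢ to v_{i−1} for i ≥ 1 and x-edge from v₀ to vₙ; y-self-loops at each vᵢ; z-edge from v₀ to t; c- and d-edges from t to v₀), every finite path p with source(p) = u and col(p) = z w z for some w ∈ {x,y}* satisfies target(p) = t; moreover if p visits v₀→vₙ at least once, then the number of x-colored edges of p after its last v₀→vₙ edge equals n. -/

import Mathlib

/-- An arena over a set of colors `C`. -/
structure Arena (C : Type) where
  V : Type
  E : Type
  finV : Fintype V
  finE : Fintype E
  /-- `isP0 v` means node `v` is controlled by Player 0. -/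
  isP0 : V → Prop
  source : E → V
  target : E → V
  col : E → C
  out : ∀ v : V, ∃ e : E, source e = v

namespace Arena

variable {C : Type} (A : Arena C)

/-- `PathFrom v es w` : the edge list `es` forms a finite path from `v` to `w`. -/
def PathFrom : A.V → List A.E → A.V → Prop
  | v, [], w => v = w
  | v, e :: es, w => A.source e = v ∧ PathFrom (A.target e) es w

/-- The endpoint of the edge list `es` started at `v`. -/
def ptarget (v : A.V) (es : List A.E) : A.V := es.foldl (fun _ e => A.target e) v

/-- A strategy of Player 0: given the starting node and the finite play so far,
it outputs the next edge. -/
def Strategy (A : Arena C) : Type := A.V → List A.E → A.E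

/-- A legal strategy moves along an edge leaving the current node. -/
def IsStrategy (S : A.Strategy) : Prop :=
  ∀ v es, A.source (S v es) = A.ptarget v es

/-- The finite edge list `es`, viewed as a play from `v`, is consistent with `S`:
at every prefix ending in a Player-0 node, the next edge is the one chosen by `S`. -/
def ConsFrom (S : A.Strategy) (v : A.V) (es : List A.E) : Prop :=
  ∀ p e r, es = p ++ e :: r → A.isP0 (A.ptarget v p) → e = S v p

/-- `P` is an infinite path starting at `v`. -/
def InfPlay (v : A.V) (P : ℕ → A.E) : Prop :=
  A.source (P 0) = v ∧ ∀ i, A.target (P i) = A.source (P (i + 1))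

/-- The length-`k` prefix of an infinite play, as a list. -/
def prefixList (P : ℕ → A.E) (k : ℕ) : List A.E := List.ofFn (fun i : Fin k => P i)

/-- `colSet S v` is the set of color sequences of infinite plays from `v` consistent with `S`. -/
def colSet (S : A.Strategy) (v : A.V) : Set (ℕ → C) :=
  { γ | ∃ P : ℕ → A.E, A.InfPlay v P ∧ (∀ k, A.ConsFrom S v (A.prefixList P k)) ∧
      γ = fun i => A.col (P i) }

/-- `colSetU S U = ⋃ v ∈ U, colSet S v`. -/
def colSetU (S : A.Strategy) (U : Set A.V) : Set (ℕ → C) := ⋃ v ∈ U, A.colSet S v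

/-- State of a memory structure after reading a list of edges. -/
def mstate {M : Type} (δ : M → A.E → M) (m0 : M) (es : List A.E) : M := es.foldl δ m0

/-- `S` is implemented by the memory structure `(M, m0, δ)`: its moves depend only
on the current node and the current memory state. -/
def HasMemory (S : A.Strategy) (M : Type) (m0 : M) (δ : M → A.E → M) : Prop :=
  ∀ v1 es1 v2 es2, A.ptarget v1 es1 = A.ptarget v2 es2 →
    A.mstate δ m0 es1 = A.mstate δ m0 es2 → S v1 es1 = S v2 es2

/-- A memory structure is chromatic if transitions depend only on colors of edges. -/
def ChromaticMem (M : Type) (δ : M → A.E → M) : Prop :=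
  ∃ σ : M → C → M, ∀ m e, δ m e = σ m (A.col e)

/-- `S` is a `q`-state strategy. -/
def IsQState (S : A.Strategy) (q : ℕ) : Prop :=
  ∃ (M : Type) (_ : Fintype M) (m0 : M) (δ : M → A.E → M),
    Fintype.card M = q ∧ A.HasMemory S M m0 δ

/-- `S` is a chromatic `q`-state strategy. -/
def IsChromaticQState (S : A.Strategy) (q : ℕ) : Prop :=
  ∃ (M : Type) (_ : Fintype M) (m0 : M) (δ : M → A.E → M),
    Fintype.card M = q ∧ A.ChromaticMem M δ ∧ A.HasMemory S M m0 δ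

end Arena

/-- The set of colors of the lower-bound arena. -/
inductive Col : Type
  | x | y | z | c | d
deriving DecidableEq

instance instFintypeCol : Fintype Col :=
  ⟨{Col.x, Col.y, Col.z, Col.c, Col.d}, fun a => by cases a <;> simp⟩

/-- Nodes of the lower-bound arena: `u`, `t`, and `v₀, …, vₙ`. -/
inductive Node (n : ℕ) : Type
  | u | t
  | v (i : Fin (n + 1))
deriving DecidableEq, Fintype

/-- Edges of the lower-bound arena. -/
inductive Edge (n : ℕ) : Type
  /-- `z`-colored edge from `u` to `vᵢ`. -/
  | uv (i : Fin (n + 1))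
  /-- `x`-colored edge from `vᵢ` to `v_{i-1}` (from `v₀` to `vₙ` when `i = 0`). -/
  | xe (i : Fin (n + 1))
  /-- `y`-colored self-loop at `vᵢ`. -/
  | ye (i : Fin (n + 1))
  /-- `z`-colored edge from `v₀` to `t`. -/
  | vt
  /-- `c`-colored edge from `t` to `v₀`. -/
  | tc
  /-- `d`-colored edge from `t` to `v₀`. -/
  | td
deriving DecidableEq, Fintype

def Edge.src {n : ℕ} : Edge n → Node n
  | uv _ => Node.u
  | xe i => Node.v i
  | ye i => Node.v i
  | vt => Node.v 0
  | tc => Node.t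
  | td => Node.t

def Edge.tgt {n : ℕ} : Edge n → Node n
  | uv i => Node.v i
  | xe i => Node.v (i - 1)
  | ye i => Node.v i
  | vt => Node.t
  | tc => Node.v 0
  | td => Node.v 0

def Edge.color {n : ℕ} : Edge n → Col
  | uv _ => Col.z
  | xe _ => Col.x
  | ye _ => Col.y
  | vt => Col.z
  | tc => Col.c
  | td => Col.d

/-- The lower-bound arena: Player 0 controls only the node `t`. -/
def lbArena (n : ℕ) : Arena Col where
  V := Node n
  E := Edge n
  finV := inferInstance
  finE := inferInstance
  isP0 := fun v => v = Node.t
  source := Edge.src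
  target := Edge.tgt
  col := Edge.color
  out := by
    intro v
    cases v with
    | u => exact ⟨Edge.uv 0, rfl⟩
    | t => exact ⟨Edge.tc, rfl⟩
    | v i => exact ⟨Edge.ye i, rfl⟩

lemma pathFrom_append (n : ℕ) (v w : Node n) (as bs : List (Edge n))
    (h : (lbArena n).PathFrom v (as ++ bs) w) :
    ∃ m, (lbArena n).PathFrom v as m ∧ (lbArena n).PathFrom m bs w := by
  induction as generalizing v with
  | nil => exact ⟨v, rfl, h⟩
  | cons e es ih =>
    obtain ⟨h1, h2⟩ := h
    obtain ⟨m, hm1, hm2⟩ := ih _ h2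
    exact ⟨m, ⟨h1, hm1⟩, hm2⟩

lemma lb_key (n : ℕ) (j : Fin (n + 1)) (es : List (Edge n)) (tgt : Node n)
    (h : (lbArena n).PathFrom (Node.v j) es tgt)
    (w : List Col) (hw : ∀ a ∈ w, a = Col.x ∨ a = Col.y)
    (hcol : es.map (lbArena n).col = w ++ [Col.z]) :
    tgt = Node.t ∧ (Edge.xe 0 ∉ es →
      es.countP (fun e => decide (e.color = Col.x)) = j.val) := by
  induction es generalizing j w with
  | nil => simp [lbArena] at hcol
  | cons e rest ih =>
    obtain ⟨hsrc, hrest⟩ := h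
    cases e with
    | uv i => exact absurd hsrc (by simp [lbArena, Edge.src])
    | tc => exact absurd hsrc (by simp [lbArena, Edge.src])
    | td => exact absurd hsrc (by simp [lbArena, Edge.src])
    | vt =>
      cases w with
      | nil =>
        simp [lbArena, Edge.color] at hcol
        subst hcol
        refine ⟨hrest.symm, fun _ => ?_⟩
        have hj : j = 0 := by
          have : Node.v (0 : Fin (n+1)) = Node.v j := hsrc
          injection this with h'; exact h'.symm
        simp [hj, List.countP_cons, Edge.color]
      | cons a w' =>
        have : (Edge.vt : Edge n).color = a := by
          have := congrArg (fun l => l.head?) hcol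
          simpa [lbArena] using this
        rcases hw a (by simp) with h' | h' <;> rw [h'] at this <;>
          exact absurd this (by simp [Edge.color])
    | ye i =>
      have hij : i = j := by simpa [lbArena, Edge.src] using hsrc
      subst hij
      cases w with
      | nil =>
        exfalso
        have := congrArg (fun l => l.head?) hcol
        simp [lbArena, Edge.color] at this
      | cons a w' =>
        have hcol' : rest.map (lbArena n).col = w' ++ [Col.z] := by
          have := congrArg List.tail hcol
          simpa [lbArena] using this
        obtain ⟨h1, h2⟩ := ih i hrest w' (fun b hb => hw b (by simp [hb])) hcol'
        refine ⟨h1, fun hne => ?_⟩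
        have hr : Edge.xe 0 ∉ rest := fun hx => hne (List.mem_cons_of_mem _ hx)
        rw [List.countP_cons, h2 hr]
        simp [Edge.color]
    | xe i =>
      have hij : i = j := by simpa [lbArena, Edge.src] using hsrc
      subst hij
      cases w with
      | nil =>
        exfalso
        have := congrArg (fun l => l.head?) hcol
        simp [lbArena, Edge.color] at this
      | cons a w' =>
        have hcol' : rest.map (lbArena n).col = w' ++ [Col.z] := by
          have := congrArg List.tail hcol
          simpa [lbArena] using this
        have htgt : (lbArena n).PathFrom (Node.v (i - 1)) rest tgt := hrest
        obtain ⟨h1, h2⟩ := ih (i - 1) htgt w' (fun b hb => hw b (by simp [hb])) hcol'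
        refine ⟨h1, fun hne => ?_⟩
        have hi0 : i ≠ 0 := by rintro rfl; exact hne (by simp)
        have hr : Edge.xe 0 ∉ rest := fun hx => hne (List.mem_cons_of_mem _ hx)
        have hivpos : 1 ≤ i.val := by
          rcases Nat.eq_zero_or_pos i.val with h0 | h0
          · exact absurd (Fin.ext h0) hi0
          · exact h0
        have hval : (i - 1).val = i.val - 1 := by
          rw [Fin.coe_sub_one, if_neg hi0]
        rw [List.countP_cons, h2 hr]
        have : (i - 1).val + 1 = i.val := by omega
        simpa [Edge.color] using this

/-- In the lower-bound arena, every finite path `p` with `source(p) = u` and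
`col(p) = z w z` for a word `w ∈ {x,y}*` ends at `t`; moreover, if `p` contains
the `x`-colored edge from `v₀` to `vₙ`, then the number of `x`-colored edges of
`p` after its last occurrence equals `n`. -/
theorem lb_path_target (n : ℕ) (hn : 1 ≤ n) (w : List Col)
    (hw : ∀ a ∈ w, a = Col.x ∨ a = Col.y)
    (es : List (Edge n)) (tgt : Node n)
    (hpath : (lbArena n).PathFrom (Node.u) es tgt)
    (hcol : es.map (lbArena n).col = Col.z :: (w ++ [Col.z])) :
    tgt = Node.t ∧
      ∀ p₁ p₂ : List (Edge n), es = p₁ ++ Edge.xe 0 :: p₂ → Edge.xe 0 ∉ p₂ →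
        p₂.countP (fun e => decide (e.color = Col.x)) = n := by
  have hes : ∃ e rest, es = e :: rest := by
    cases es with
    | nil => simp [lbArena] at hcol
    | cons e rest => exact ⟨e, rest, rfl⟩
  obtain ⟨e, rest, rfl⟩ := hes
  obtain ⟨hsrc, hrest⟩ := hpath
  have hcole : (lbArena n).col e = Col.z ∧ rest.map (lbArena n).col = w ++ [Col.z] := by
    simpa [lbArena] using hcol
  have he : ∃ i, e = Edge.uv i := by
    cases e with
    | uv i => exact ⟨i, rfl⟩
    | xe i => exact absurd hcole.1 (by simp [lbArena, Edge.color])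
    | ye i => exact absurd hcole.1 (by simp [lbArena, Edge.color])
    | vt => exact absurd hsrc (by simp [lbArena, Edge.src])
    | tc => exact absurd hsrc (by simp [lbArena, Edge.src])
    | td => exact absurd hsrc (by simp [lbArena, Edge.src])
  obtain ⟨i, rfl⟩ := he
  have hkey := lb_key n i rest tgt hrest w hw hcole.2
  refine ⟨hkey.1, ?_⟩
  intro p1 p2 hsplit hnotin
  -- p1 is nonempty since its first element is uv i (color z), while first of xe0::p2 is x... 
  have hp1ne : p1 ≠ [] := by
    rintro rfl
    simp at hsplit
  obtain ⟨q, hq⟩ : ∃ q, p1 = Edge.uv i :: q := by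
    cases p1 with
    | nil => exact absurd rfl hp1ne
    | cons a q =>
      simp at hsplit
      exact ⟨q, by rw [hsplit.1]⟩
  have hrest_split : rest = q ++ Edge.xe 0 :: p2 := by
    rw [hq] at hsplit
    simpa using hsplit
  subst hrest_split
  obtain ⟨m, hm1, hm2⟩ := pathFrom_append n _ _ q (Edge.xe 0 :: p2) hrest
  obtain ⟨hm0, hp2path⟩ := hm2
  have hp2path' : (lbArena n).PathFrom (Node.v ((0 : Fin (n+1)) - 1)) p2 tgt := hp2path
  -- colors of p2
  have hcolrest : q.map (lbArena n).col ++ Col.x :: p2.map (lbArena n).col = w ++ [Col.z] := by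
    have := hcole.2
    simpa [Edge.color, lbArena] using this
  rcases List.eq_nil_or_concat (p2.map (lbArena n).col) with hnil | ⟨w2, b, hw2eq⟩
  · have hp2 : p2 = [] := by simpa [lbArena] using hnil
    subst hp2
    have hcolrest : q.map (lbArena n).col ++ Col.x :: [] = w ++ [Col.z] := hcolrest
    have heq : q.map (lbArena n).col ++ [Col.x] = w ++ [Col.z] := by simpa using hcolrest
    have := (List.append_inj' heq rfl).2
    simp at this
  · rw [hw2eq] at hcolrest
    have heq : (q.map (lbArena n).col ++ Col.x :: w2) ++ [b] = w ++ [Col.z] := by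
      simpa using hcolrest
    obtain ⟨hw', hb⟩ := List.append_inj' heq rfl
    have hb' : b = Col.z := by simpa using hb
    have hcolL : p2.map (lbArena n).col = w2 ++ [Col.z] := by rw [hw2eq, hb']; simp
    have hw2' : ∀ a ∈ w2, a = Col.x ∨ a = Col.y := by
      intro a ha
      exact hw a (by rw [← hw']; simp [ha])
    obtain ⟨_, h2⟩ := lb_key n (0 - 1) p2 tgt hp2path' w2 hw2' hcolL
    rw [h2 hnotin, Fin.coe_sub_one]
    simp
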